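/- arXiv:1701.08733 — 2 statements merged into one kernel-verified Lean document; each statement's English description precedes it below -/
import Mathlib

section
/- For every integer i ≥ 0 there exists a unique formal power series π_i(T) ∈ T·ℤ_p[[T]] such that E(π_i(T)) = (1+T)^{p^i}. -/
open PowerSeries

noncomputable section

open scoped Classical in
/-- The series ℓ(T) = ∑_{i≥0} T^{p^i}/p^i over ℚ. -/
def lseries (p : ℕ) : PowerSeries ℚ :=
  PowerSeries.mk fun n => if ∃ i : ℕ, n = p ^ i then (n : ℚ)⁻¹ else 0

/-- Substitution `f(g)` of a power series `g` with zero constant coefficient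
into a power series `f`. -/
def psComp {R : Type*} [CommSemiring R] (g f : PowerSeries R) : PowerSeries R :=
  PowerSeries.mk fun n =>
    ∑ k ∈ Finset.range (n + 1), PowerSeries.coeff k f * PowerSeries.coeff n (g ^ k)

/-- The Artin–Hasse exponential E(T) = exp(∑ T^{p^i}/p^i) over ℚ. -/
def artinHasse (p : ℕ) : PowerSeries ℚ := psComp (lseries p) (PowerSeries.exp ℚ)

variable (p : ℕ) [Fact p.Prime]

/-- The property that `Ep` is the Artin–Hasse exponential regarded as a power
series with coefficients in `ℤ_p` (its coefficients lie in `ℤ_(p) ⊆ ℤ_p`). -/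
def IsArtinHasseZp (Ep : PowerSeries ℤ_[p]) : Prop :=
  PowerSeries.map (PadicInt.Coe.ringHom) Ep
    = PowerSeries.map (Rat.castHom ℚ_[p]) (artinHasse p)

/-- The property that `πfam i` is the power series `π_i(T) ∈ T·ℤ_p[[T]]`
with `E(π_i(T)) = (1+T)^{p^i}`. -/
def IsPiFamily (Ep : PowerSeries ℤ_[p]) (πfam : ℕ → PowerSeries ℤ_[p]) : Prop :=
  ∀ i : ℕ, PowerSeries.constantCoeff (R := ℤ_[p]) (πfam i) = 0
    ∧ psComp (πfam i) Ep = (1 + X) ^ p ^ i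

section Aux

variable {R : Type*} [CommRing R]

lemma constCoeff_geom (x y : PowerSeries R) (hx : PowerSeries.constantCoeff (R := R) x = 0)
    (hy : PowerSeries.constantCoeff (R := R) y = 0) {k : ℕ} (hk : 2 ≤ k) :
    PowerSeries.constantCoeff (R := R) (∑ j ∈ Finset.range k, x ^ j * y ^ (k - 1 - j)) = 0 := by
  rw [map_sum]
  refine Finset.sum_eq_zero fun j hj => ?_
  rw [map_mul, map_pow, map_pow, hx, hy]
  rcases Nat.eq_zero_or_pos j with h | h
  · subst h
    rw [pow_zero, one_mul, zero_pow (by omega)]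
  · rw [zero_pow (by omega), zero_mul]

lemma coeff_pow_congr (n : ℕ) {x y : PowerSeries R}
    (hx : PowerSeries.constantCoeff (R := R) x = 0) (hy : PowerSeries.constantCoeff (R := R) y = 0)
    (hag : ∀ m < n, PowerSeries.coeff (R := R) m x = PowerSeries.coeff (R := R) m y)
    {k : ℕ} (hk : 2 ≤ k) :
    PowerSeries.coeff (R := R) n (x ^ k) = PowerSeries.coeff (R := R) n (y ^ k) := by
  have key : x ^ k - y ^ k = (∑ j ∈ Finset.range k, x ^ j * y ^ (k - 1 - j)) * (x - y) :=
    (geom_sum₂_mul x y k).symm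
  have h0 : PowerSeries.coeff (R := R) n (x ^ k - y ^ k) = 0 := by
    rw [key, PowerSeries.coeff_mul]
    refine Finset.sum_eq_zero fun pq hpq => ?_
    rw [Finset.HasAntidiagonal.mem_antidiagonal] at hpq
    rcases Nat.lt_or_ge pq.2 n with h | h
    · rw [map_sub, hag _ h, sub_self, mul_zero]
    · have h1 : pq.1 = 0 := by omega
      rw [h1, PowerSeries.coeff_zero_eq_constantCoeff,
        constCoeff_geom x y hx hy hk, zero_mul]
  rw [map_sub, sub_eq_zero] at h0
  exact h0

/-- Recursively defined coefficients of the inverse-composition series. -/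
def cfun (E F : PowerSeries R) : ℕ → R
  | 0 => 0
  | (n+1) =>
    PowerSeries.coeff (R := R) (n+1) F - ∑ k ∈ Finset.range (n+2),
      (if k = 1 then 0 else PowerSeries.coeff (R := R) k E *
        PowerSeries.coeff (R := R) (n+1)
          ((PowerSeries.mk fun m => if h : m < n+1 then cfun E F m else 0) ^ k))
  decreasing_by omega

/-- Decomposition of the composition sum, isolating the degree-`n` coefficient. -/
lemma sum_decomp (E : PowerSeries R) (h1 : PowerSeries.coeff (R := R) 1 E = 1)
    (π τ : PowerSeries R) (h0π : PowerSeries.constantCoeff (R := R) π = 0)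
    (h0τ : PowerSeries.constantCoeff (R := R) τ = 0) (n : ℕ) (hn : 1 ≤ n)
    (hag : ∀ m < n, PowerSeries.coeff (R := R) m π = PowerSeries.coeff (R := R) m τ) :
    ∑ k ∈ Finset.range (n+1), PowerSeries.coeff (R := R) k E * PowerSeries.coeff (R := R) n (π ^ k)
      = PowerSeries.coeff (R := R) n π + ∑ k ∈ Finset.range (n+1),
          (if k = 1 then 0 else PowerSeries.coeff (R := R) k E * PowerSeries.coeff (R := R) n (τ ^ k)) := by
  have hterm : ∀ k ∈ Finset.range (n+1),
      PowerSeries.coeff (R := R) k E * PowerSeries.coeff (R := R) n (π ^ k)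
        = (if k = 1 then PowerSeries.coeff (R := R) n π else 0)
          + (if k = 1 then 0 else PowerSeries.coeff (R := R) k E * PowerSeries.coeff (R := R) n (τ ^ k)) := by
    intro k hk
    by_cases h : k = 1
    · subst h
      simp [pow_one, h1]
    · simp only [if_neg h, zero_add]
      rcases Nat.eq_zero_or_pos k with h0 | h0
      · subst h0; simp
      · have hk2 : 2 ≤ k := by omega
        rw [coeff_pow_congr n h0π h0τ hag hk2]
  rw [Finset.sum_congr rfl hterm, Finset.sum_add_distrib]
  congr 1
  rw [Finset.sum_ite_eq' (Finset.range (n+1)) 1 (fun _ => PowerSeries.coeff (R := R) n π)]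
  rw [if_pos (Finset.mem_range.mpr (by omega))]

/-- Main abstract lemma: if `coeff 1 E = 1`, then for every `F` with the same
constant coefficient as `E` there is a unique `π ∈ T·R[[T]]` with `E(π) = F`. -/
lemma existsUnique_psComp (E : PowerSeries R) (h1 : PowerSeries.coeff (R := R) 1 E = 1)
    (F : PowerSeries R)
    (hF : PowerSeries.constantCoeff (R := R) F = PowerSeries.constantCoeff (R := R) E) :
    ∃! π : PowerSeries R,
      PowerSeries.constantCoeff (R := R) π = 0 ∧ psComp π E = F := by
  set π : PowerSeries R := PowerSeries.mk (cfun E F) with hπdef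
  have hπ0 : PowerSeries.constantCoeff (R := R) π = 0 := by
    rw [← PowerSeries.coeff_zero_eq_constantCoeff, hπdef, PowerSeries.coeff_mk, cfun]
  have hcoeffπ : ∀ m, PowerSeries.coeff (R := R) m π = cfun E F m := fun m => by
    rw [hπdef, PowerSeries.coeff_mk]
  have hcomp : psComp π E = F := by
    ext n
    rcases Nat.eq_zero_or_pos n with hn | hn
    · subst hn
      rw [psComp, PowerSeries.coeff_mk, Finset.sum_range_one, pow_zero,
        PowerSeries.coeff_zero_eq_constantCoeff, map_one, mul_one, hF]
    · obtain ⟨m, rfl⟩ := Nat.exists_eq_succ_of_ne_zero (by omega : n ≠ 0)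
      set τ : PowerSeries R := PowerSeries.mk fun j => if h : j < m+1 then cfun E F j else 0
        with hτdef
      have hτ0 : PowerSeries.constantCoeff (R := R) τ = 0 := by
        rw [← PowerSeries.coeff_zero_eq_constantCoeff, hτdef, PowerSeries.coeff_mk]
        simp only [dif_pos (Nat.succ_pos m)]
        rw [cfun]
      have hag : ∀ j < m+1, PowerSeries.coeff (R := R) j π = PowerSeries.coeff (R := R) j τ := by
        intro j hj
        rw [hcoeffπ, hτdef, PowerSeries.coeff_mk, dif_pos hj]
      rw [psComp, PowerSeries.coeff_mk,
        sum_decomp E h1 π τ hπ0 hτ0 (m+1) (by omega) hag, hcoeffπ]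
      rw [cfun]
      ring
  refine ⟨π, ⟨hπ0, hcomp⟩, ?_⟩
  rintro π' ⟨h0', hc'⟩
  ext n
  induction n using Nat.strong_induction_on with
  | _ n ih =>
    rcases Nat.eq_zero_or_pos n with hn | hn
    · subst hn
      rw [PowerSeries.coeff_zero_eq_constantCoeff, h0', hπ0]
    · have hag : ∀ m < n, PowerSeries.coeff (R := R) m π' = PowerSeries.coeff (R := R) m π :=
        fun m hm => ih m hm
      have hagπ : ∀ m < n, PowerSeries.coeff (R := R) m π = PowerSeries.coeff (R := R) m π :=
        fun m _ => rfl
      have hco : PowerSeries.coeff (R := R) n (psComp π' E) = PowerSeries.coeff (R := R) n (psComp π E) := by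
        rw [hc', hcomp]
      rw [psComp, psComp, PowerSeries.coeff_mk, PowerSeries.coeff_mk,
        sum_decomp E h1 π' π h0' hπ0 n hn hag,
        sum_decomp E h1 π π hπ0 hπ0 n hn hagπ] at hco
      exact add_right_cancel hco

end Aux

section ArtinHasseCoeffs

lemma artinHasse_coeff_zero (p : ℕ) : PowerSeries.coeff (R := ℚ) 0 (artinHasse p) = 1 := by
  rw [artinHasse, psComp, PowerSeries.coeff_mk, Finset.sum_range_one, pow_zero]
  simp [PowerSeries.coeff_exp]

lemma artinHasse_coeff_one (p : ℕ) [Fact p.Prime] :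
    PowerSeries.coeff (R := ℚ) 1 (artinHasse p) = 1 := by
  rw [artinHasse, psComp, PowerSeries.coeff_mk]
  rw [show (1 + 1 : ℕ) = 2 from rfl, Finset.sum_range_succ, Finset.sum_range_one]
  rw [pow_zero, pow_one]
  have h1 : PowerSeries.coeff (R := ℚ) 1 (1 : PowerSeries ℚ) = 0 := by simp
  have h2 : PowerSeries.coeff (R := ℚ) 1 (lseries p) = 1 := by
    rw [lseries, PowerSeries.coeff_mk, if_pos ⟨0, (pow_zero p).symm⟩]
    norm_num
  rw [h1, h2]
  simp [PowerSeries.coeff_exp]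

end ArtinHasseCoeffs

/-- for every integer `i ≥ 0` there is a unique formal power series
`π ∈ T·ℤ_p[[T]]` with `E(π) = (1+T)^{p^i}`. -/
theorem statement2 (Ep : PowerSeries ℤ_[p]) (hEp : IsArtinHasseZp p Ep) (i : ℕ) :
    ∃! π : PowerSeries ℤ_[p],
      PowerSeries.constantCoeff (R := ℤ_[p]) π = 0 ∧ psComp π Ep = (1 + X) ^ p ^ i := by
  have hinj : Function.Injective (PadicInt.Coe.ringHom (p := p)) :=
    Subtype.coe_injective
  rw [IsArtinHasseZp] at hEp
  have h0 : PowerSeries.constantCoeff (R := ℤ_[p]) Ep = 1 := by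
    apply hinj
    have := congrArg (PowerSeries.coeff (R := ℚ_[p]) 0) hEp
    rw [PowerSeries.coeff_map, PowerSeries.coeff_map,
      PowerSeries.coeff_zero_eq_constantCoeff] at this
    rw [this, map_one, artinHasse_coeff_zero, map_one]
  have h1 : PowerSeries.coeff (R := ℤ_[p]) 1 Ep = 1 := by
    apply hinj
    have := congrArg (PowerSeries.coeff (R := ℚ_[p]) 1) hEp
    rw [PowerSeries.coeff_map, PowerSeries.coeff_map] at this
    rw [this, map_one, artinHasse_coeff_one, map_one]
  have hF : PowerSeries.constantCoeff (R := ℤ_[p]) ((1 + X) ^ p ^ i : PowerSeries ℤ_[p])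
      = PowerSeries.constantCoeff (R := ℤ_[p]) Ep := by
    rw [map_pow, map_add, map_one, PowerSeries.constantCoeff_X, add_zero, one_pow, h0]
  exact existsUnique_psComp Ep h1 _ hF

end
end

section
/- Let A be a commutative ℚ-algebra, a ≥ 1 an integer, and x ∈ A an element with x^{p^a} = x. Then in A[[T]] one has the identity ∏_{l=0}^{a−1} E(x^{p^l}·T) = exp(t·ℓ(T)), where t = ∑_{l=0}^{a−1} x^{p^l}, ℓ(T) = ∑_{i≥0} T^{p^i}/p^i, E(c·T) denotes the power series obtained from E(T) by the rescaling T ↦ c·T, and exp(f) denotes the substitution of the constant-term-zero series f into the exponential power series. (When A is the fraction field of ℤ_q = W(𝔽_q) and x is the Teichmüller lift of an element of 𝔽_q, the element t equals Tr_{ℤ_q/ℤ_p}(x), so this identity expresses that E(T)^{Tr_{ℤ_q/ℤ_p}(x)} = Norm_{ℤ_q[[T]]/ℤ_p[[T]]}(E(Tx)).) -/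
open PowerSeries

noncomputable section

section Aux

variable {R : Type*} [CommRing R]

lemma coeff_eq_zero_of_X_pow_dvd {f : PowerSeries R} {k m : ℕ}
    (h : (PowerSeries.X : PowerSeries R) ^ k ∣ f) (hm : m < k) :
    PowerSeries.coeff m f = 0 :=
  (PowerSeries.X_pow_dvd_iff.mp h) m hm

lemma coeff_pow_eq_zero {g : PowerSeries R} (hg : PowerSeries.constantCoeff g = 0)
    {k m : ℕ} (hm : m < k) : PowerSeries.coeff m (g ^ k) = 0 :=
  coeff_eq_zero_of_X_pow_dvd (pow_dvd_pow_of_dvd (PowerSeries.X_dvd_iff.mpr hg) k) hm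

lemma map_psComp {S : Type*} [CommRing S] (φ : R →+* S) (g f : PowerSeries R) :
    PowerSeries.map φ (psComp g f) = psComp (PowerSeries.map φ g) (PowerSeries.map φ f) := by
  ext n
  simp [psComp, map_sum, ← map_pow]

lemma rescale_psComp (c : R) (g f : PowerSeries R) :
    PowerSeries.rescale c (psComp g f) = psComp (PowerSeries.rescale c g) f := by
  ext n
  simp only [psComp, PowerSeries.coeff_rescale, PowerSeries.coeff_mk, Finset.mul_sum,
    ← map_pow]
  exact Finset.sum_congr rfl fun k _ => by ring

lemma psComp_zero_exp {A : Type*} [CommRing A] [Algebra ℚ A] :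
    psComp (0 : PowerSeries A) (PowerSeries.exp A) = 1 := by
  ext n
  simp only [psComp, PowerSeries.coeff_mk]
  rcases Nat.eq_zero_or_pos n with rfl | hn
  · simp [PowerSeries.coeff_exp]
  · rw [Finset.sum_eq_zero, PowerSeries.coeff_one, if_neg hn.ne']
    intro k hk
    rcases Nat.eq_zero_or_pos k with rfl | hk0
    · simp [PowerSeries.coeff_one, hn.ne']
    · simp [zero_pow hk0.ne', hn.ne']

open Finset in
lemma psComp_exp_mul {A : Type*} [CommRing A] [Algebra ℚ A] {g h : PowerSeries A}
    (hg : PowerSeries.constantCoeff g = 0) (hh : PowerSeries.constantCoeff h = 0) :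
    psComp g (PowerSeries.exp A) * psComp h (PowerSeries.exp A)
      = psComp (g + h) (PowerSeries.exp A) := by
  classical
  ext n
  set E : ℕ → A := fun k => algebraMap ℚ A (1 / k.factorial)
  have coeffE : ∀ k, PowerSeries.coeff k (PowerSeries.exp A) = E k := fun k =>
    PowerSeries.coeff_exp k
  set F : ℕ → ℕ → A := fun k r => E k * E r * PowerSeries.coeff n (g ^ k * h ^ r) with hF
  have hFzero : ∀ k r, n < k + r → F k r = 0 := by
    intro k r hkr
    have hdvd : (PowerSeries.X : PowerSeries A) ^ (k + r) ∣ g ^ k * h ^ r := by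
      rw [pow_add]
      exact mul_dvd_mul (pow_dvd_pow_of_dvd (PowerSeries.X_dvd_iff.mpr hg) k)
        (pow_dvd_pow_of_dvd (PowerSeries.X_dvd_iff.mpr hh) r)
    simp [hF, coeff_eq_zero_of_X_pow_dvd hdvd hkr]
  -- LHS as a double sum over the square
  have lhs_eq : PowerSeries.coeff n (psComp g (PowerSeries.exp A) * psComp h (PowerSeries.exp A))
      = ∑ k ∈ range (n + 1), ∑ r ∈ range (n + 1), F k r := by
    rw [PowerSeries.coeff_mul]
    have step1 : ∀ m j : ℕ, m + j = n →
        PowerSeries.coeff m (psComp g (PowerSeries.exp A))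
          * PowerSeries.coeff j (psComp h (PowerSeries.exp A))
        = ∑ k ∈ range (n + 1), ∑ r ∈ range (n + 1),
            (E k * PowerSeries.coeff m (g ^ k)) * (E r * PowerSeries.coeff j (h ^ r)) := by
      intro m j hmj
      have hm : m ≤ n := by omega
      have hj : j ≤ n := by omega
      have hgm : PowerSeries.coeff m (psComp g (PowerSeries.exp A))
          = ∑ k ∈ range (n + 1), E k * PowerSeries.coeff m (g ^ k) := by
        rw [psComp, PowerSeries.coeff_mk]
        refine (Finset.sum_subset (fun k hk => by
          simp only [mem_range] at hk ⊢; omega) ?_).trans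
          (Finset.sum_congr rfl fun k _ => by rw [coeffE])
        intro k hk hk'
        simp only [mem_range] at hk hk'
        rw [coeff_pow_eq_zero hg (by omega), mul_zero]
      have hhj : PowerSeries.coeff j (psComp h (PowerSeries.exp A))
          = ∑ r ∈ range (n + 1), E r * PowerSeries.coeff j (h ^ r) := by
        rw [psComp, PowerSeries.coeff_mk]
        refine (Finset.sum_subset (fun k hk => by
          simp only [mem_range] at hk ⊢; omega) ?_).trans
          (Finset.sum_congr rfl fun k _ => by rw [coeffE])
        intro r hr hr'
        simp only [mem_range] at hr hr'
        rw [coeff_pow_eq_zero hh (by omega), mul_zero]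
      rw [hgm, hhj, Finset.sum_mul_sum]
    calc ∑ mj ∈ antidiagonal n,
          PowerSeries.coeff mj.1 (psComp g (PowerSeries.exp A))
            * PowerSeries.coeff mj.2 (psComp h (PowerSeries.exp A))
        = ∑ mj ∈ antidiagonal n, ∑ k ∈ range (n + 1), ∑ r ∈ range (n + 1),
            (E k * PowerSeries.coeff mj.1 (g ^ k)) * (E r * PowerSeries.coeff mj.2 (h ^ r)) :=
          Finset.sum_congr rfl fun mj hmj => step1 mj.1 mj.2 (Finset.HasAntidiagonal.mem_antidiagonal.mp hmj)
      _ = ∑ k ∈ range (n + 1), ∑ r ∈ range (n + 1), ∑ mj ∈ antidiagonal n,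
            (E k * PowerSeries.coeff mj.1 (g ^ k)) * (E r * PowerSeries.coeff mj.2 (h ^ r)) := by
          rw [Finset.sum_comm]
          exact Finset.sum_congr rfl fun k _ => Finset.sum_comm
      _ = ∑ k ∈ range (n + 1), ∑ r ∈ range (n + 1), F k r := by
          refine Finset.sum_congr rfl fun k _ => Finset.sum_congr rfl fun r _ => ?_
          rw [hF]
          simp only [PowerSeries.coeff_mul, Finset.mul_sum]
          exact Finset.sum_congr rfl fun mj _ => by ring
  -- RHS as a triangular sum
  have hEC : ∀ s k : ℕ, k ≤ s → E s * (s.choose k : A) = E k * E (s - k) := by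
    intro s k hks
    have hq : (1 / s.factorial : ℚ) * (s.choose k : ℚ)
        = (1 / k.factorial) * (1 / (s - k).factorial) := by
      rw [Nat.cast_choose ℚ hks]
      have h1 : (s.factorial : ℚ) ≠ 0 := Nat.cast_ne_zero.mpr s.factorial_ne_zero
      have h2 : (k.factorial : ℚ) ≠ 0 := Nat.cast_ne_zero.mpr k.factorial_ne_zero
      have h3 : ((s - k).factorial : ℚ) ≠ 0 := Nat.cast_ne_zero.mpr (s - k).factorial_ne_zero
      field_simp
    calc E s * (s.choose k : A)
        = algebraMap ℚ A ((1 / s.factorial) * (s.choose k : ℚ)) := by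
          rw [map_mul, map_natCast]
      _ = algebraMap ℚ A ((1 / k.factorial) * (1 / (s - k).factorial)) := by rw [hq]
      _ = E k * E (s - k) := by rw [map_mul]
  have rhs_eq : PowerSeries.coeff n (psComp (g + h) (PowerSeries.exp A))
      = ∑ s ∈ range (n + 1), ∑ k ∈ range (s + 1), F k (s - k) := by
    rw [psComp, PowerSeries.coeff_mk]
    refine Finset.sum_congr rfl fun s _ => ?_
    rw [coeffE, add_pow, map_sum, Finset.mul_sum]
    refine Finset.sum_congr rfl fun k hk => ?_
    have hks : k ≤ s := by simpa using Nat.lt_succ_iff.mp (mem_range.mp hk)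
    rw [hF]
    have : E s * PowerSeries.coeff n (g ^ k * h ^ (s - k) * (s.choose k : PowerSeries A))
        = (E s * (s.choose k : A)) * PowerSeries.coeff n (g ^ k * h ^ (s - k)) := by
      have : (s.choose k : PowerSeries A) = PowerSeries.C (R := A) (s.choose k : A) := by
        simp only [map_natCast]
      rw [this, mul_comm (g ^ k * h ^ (s - k)) _, PowerSeries.coeff_C_mul]
      ring
    rw [this, hEC s k hks]
  -- Reindex the triangular sum to match the square sum
  rw [lhs_eq, rhs_eq]
  have square_eq : ∑ k ∈ range (n + 1), ∑ r ∈ range (n + 1), F k r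
      = ∑ kr ∈ (range (n + 1) ×ˢ range (n + 1)).filter (fun kr => kr.1 + kr.2 ≤ n),
          F kr.1 kr.2 := by
    rw [← Finset.sum_product']
    refine (Finset.sum_filter_of_ne ?_).symm
    intro kr _ hne
    by_contra hgt
    exact hne (hFzero kr.1 kr.2 (by omega))
  rw [square_eq]
  conv_rhs => rw [Finset.sum_sigma']
  refine (Finset.sum_nbij' (fun sk => (sk.2, sk.1 - sk.2)) (fun kr => ⟨kr.1 + kr.2, kr.1⟩)
    ?_ ?_ ?_ ?_ ?_).symm
  · rintro ⟨s, k⟩ hsk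
    simp only [Finset.mem_sigma, mem_range] at hsk
    simp only [Finset.mem_filter, Finset.mem_product, mem_range]
    omega
  · rintro ⟨k, r⟩ hkr
    simp only [Finset.mem_filter, Finset.mem_product, mem_range] at hkr
    simp only [Finset.mem_sigma, mem_range]
    omega
  · rintro ⟨s, k⟩ hsk
    simp only [Finset.mem_sigma, mem_range] at hsk
    simp only [Sigma.mk.inj_iff]
    constructor
    · omega
    · exact heq_of_eq (by omega)
  · rintro ⟨k, r⟩ _
    simp
  · rintro ⟨s, k⟩ _
    rfl

open Finset in
lemma psComp_exp_prod {A : Type*} [CommRing A] [Algebra ℚ A] {ι : Type*} (s : Finset ι)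
    (g : ι → PowerSeries A) (hg : ∀ i ∈ s, PowerSeries.constantCoeff (g i) = 0) :
    ∏ i ∈ s, psComp (g i) (PowerSeries.exp A) = psComp (∑ i ∈ s, g i) (PowerSeries.exp A) := by
  classical
  induction s using Finset.cons_induction with
  | empty => rw [Finset.prod_empty, Finset.sum_empty, psComp_zero_exp]
  | cons i s his ih =>
    have h2 : PowerSeries.constantCoeff (∑ j ∈ s, g j) = 0 := by
      rw [map_sum PowerSeries.constantCoeff g s]
      exact Finset.sum_eq_zero fun j hj => hg j (Finset.mem_cons_of_mem hj)
    rw [Finset.prod_cons, Finset.sum_cons, ih (fun j hj => hg j (Finset.mem_cons_of_mem hj)),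
      psComp_exp_mul (hg i (Finset.mem_cons_self i s)) h2]

end Aux

/-- for a commutative ℚ-algebra `A`, an integer `a ≥ 1` and `x ∈ A` with
`x^{p^a} = x`, one has `∏_{l=0}^{a−1} E(x^{p^l}·T) = exp(t·ℓ(T))` in `A[[T]]`, where
`t = ∑_{l=0}^{a−1} x^{p^l}` and `ℓ(T) = ∑_{i≥0} T^{p^i}/p^i`. -/
theorem statement12 (p : ℕ) [Fact p.Prime] (A : Type*) [CommRing A] [Algebra ℚ A]
    (a : ℕ) (ha : 1 ≤ a) (x : A) (hx : x ^ p ^ a = x) :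
    ∏ l ∈ Finset.range a,
        PowerSeries.rescale (x ^ p ^ l) (PowerSeries.map (algebraMap ℚ A) (artinHasse p))
      = psComp
          (PowerSeries.C (R := A) (∑ l ∈ Finset.range a, x ^ p ^ l)
            * PowerSeries.map (algebraMap ℚ A) (lseries p))
          (PowerSeries.exp A) := by
  classical
  set φ : ℚ →+* A := algebraMap ℚ A with hφ
  set L : PowerSeries A := PowerSeries.map φ (lseries p) with hLdef
  have hL0 : PowerSeries.constantCoeff L = 0 := by
    rw [← PowerSeries.coeff_zero_eq_constantCoeff_apply, hLdef, PowerSeries.coeff_map,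
      lseries, PowerSeries.coeff_mk]
    split_ifs <;> simp
  -- each factor is an exponential
  have factor : ∀ c : A,
      PowerSeries.rescale c (PowerSeries.map φ (artinHasse p))
        = psComp (PowerSeries.rescale c L) (PowerSeries.exp A) := by
    intro c
    rw [artinHasse, map_psComp, PowerSeries.map_exp, ← hLdef, rescale_psComp]
  -- periodicity of l ↦ x ^ p ^ l
  have key : ∀ m : ℕ, x ^ p ^ (m + a) = x ^ p ^ m := by
    intro m
    rw [pow_add, mul_comm, pow_mul, hx]
  have shift : ∀ i : ℕ, ∑ l ∈ Finset.range a, x ^ p ^ (l + i)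
      = ∑ l ∈ Finset.range a, x ^ p ^ l := by
    intro i
    induction i with
    | zero => simp
    | succ i ih =>
      have h1 : ∑ l ∈ Finset.range a, x ^ p ^ (l + (i + 1))
          = ∑ l ∈ Finset.range a, x ^ p ^ ((l + 1) + i) :=
        Finset.sum_congr rfl fun l _ => by rw [show l + (i + 1) = (l + 1) + i by omega]
      have h2 : ∑ l ∈ Finset.range a, x ^ p ^ ((l + 1) + i) + x ^ p ^ (0 + i)
          = ∑ l ∈ Finset.range a, x ^ p ^ (l + i) + x ^ p ^ (a + i) := by
        rw [← Finset.sum_range_succ' (fun l => x ^ p ^ (l + i)) a,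
          Finset.sum_range_succ (fun l => x ^ p ^ (l + i)) a]
      have h3 : x ^ p ^ (a + i) = x ^ p ^ (0 + i) := by
        rw [zero_add, add_comm a i, key i]
      rw [h3] at h2
      rw [h1, add_right_cancel h2, ih]
  -- the sum of rescaled ℓ's
  have sumL : ∑ l ∈ Finset.range a, PowerSeries.rescale (x ^ p ^ l) L
      = PowerSeries.C (R := A) (∑ l ∈ Finset.range a, x ^ p ^ l) * L := by
    ext n
    rw [map_sum, PowerSeries.coeff_C_mul]
    simp only [PowerSeries.coeff_rescale]
    by_cases hex : ∃ i : ℕ, n = p ^ i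
    · obtain ⟨i, rfl⟩ := hex
      have hp : ∀ l : ℕ, (x ^ p ^ l) ^ p ^ i = x ^ p ^ (l + i) := fun l => by
        rw [← pow_mul, ← pow_add]
      calc ∑ l ∈ Finset.range a, (x ^ p ^ l) ^ p ^ i * PowerSeries.coeff (p ^ i) L
          = (∑ l ∈ Finset.range a, x ^ p ^ (l + i)) * PowerSeries.coeff (p ^ i) L := by
            rw [Finset.sum_mul]
            exact Finset.sum_congr rfl fun l _ => by rw [hp l]
        _ = (∑ l ∈ Finset.range a, x ^ p ^ l) * PowerSeries.coeff (p ^ i) L := by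
            rw [shift i]
    · have : PowerSeries.coeff n L = 0 := by
        rw [hLdef, PowerSeries.coeff_map, lseries, PowerSeries.coeff_mk, if_neg hex, map_zero]
      simp [this]
  calc ∏ l ∈ Finset.range a,
        PowerSeries.rescale (x ^ p ^ l) (PowerSeries.map (algebraMap ℚ A) (artinHasse p))
      = ∏ l ∈ Finset.range a,
          psComp (PowerSeries.rescale (x ^ p ^ l) L) (PowerSeries.exp A) :=
        Finset.prod_congr rfl fun l _ => factor _
    _ = psComp (∑ l ∈ Finset.range a, PowerSeries.rescale (x ^ p ^ l) L)
          (PowerSeries.exp A) := by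
        refine psComp_exp_prod _ _ fun l _ => ?_
        rw [← PowerSeries.coeff_zero_eq_constantCoeff_apply, PowerSeries.coeff_rescale,
          pow_zero, one_mul, PowerSeries.coeff_zero_eq_constantCoeff_apply, hL0]
    _ = psComp (PowerSeries.C (R := A) (∑ l ∈ Finset.range a, x ^ p ^ l)
          * PowerSeries.map (algebraMap ℚ A) (lseries p)) (PowerSeries.exp A) := by
        rw [sumL, hLdef]

end
end
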